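/- For every integer Q ≥ 2, |Σ_{d=1}^{Q} μ(d)·log(⌊Q/d⌋)/(d⁴⌊Q/d⌋²) − (6 log Q)/(π²Q²) + ζ'(2)/(Q²ζ(2)²)| ≤ (16(log Q)² + 12 log Q + 64)/Q³. -/

import Mathlib

open ArithmeticFunction LSeries
open scoped LSeries.notation
open scoped ArithmeticFunction.Moebius

noncomputable def zetaDeriv2 : ℝ := (deriv riemannZeta 2).re

lemma two_re : (2:ℂ).re = 2 := by norm_num

lemma hz2 : riemannZeta 2 ≠ 0 :=
  riemannZeta_ne_zero_of_one_lt_re (by norm_num)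

lemma Lmu_eq {s : ℂ} (hs : 1 < s.re) : L ↗μ s = (riemannZeta s)⁻¹ := by
  have h1 := LSeries_zeta_mul_Lseries_moebius (s := s) hs
  rw [LSeries_zeta_eq_riemannZeta hs] at h1
  exact eq_inv_of_mul_eq_one_right h1

lemma LlogMu_eq : L (logMul ↗μ) 2 = deriv riemannZeta 2 / (riemannZeta 2) ^ 2 := by
  have habs : abscissaOfAbsConv ↗μ < (2:ℂ).re := by
    rw [abscissaOfAbsConv_moebius, two_re]; exact_mod_cast one_lt_two
  have h1 : deriv (L ↗μ) 2 = - L (logMul ↗μ) 2 := LSeries_deriv habs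
  have heq : (fun s => L ↗μ s) =ᶠ[nhds (2:ℂ)] (fun s => (riemannZeta s)⁻¹) := by
    have hopen : IsOpen {s : ℂ | 1 < s.re} := isOpen_lt continuous_const Complex.continuous_re
    filter_upwards [hopen.mem_nhds (by norm_num : (2:ℂ) ∈ {s : ℂ | 1 < s.re})] with s hs
    exact Lmu_eq hs
  have h2 : deriv (L ↗μ) 2 = deriv (fun s => (riemannZeta s)⁻¹) 2 := heq.deriv_eq
  have h3 : deriv (fun s => (riemannZeta s)⁻¹) 2 = -deriv riemannZeta 2 / (riemannZeta 2)^2 :=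
    deriv_inv'' (differentiableAt_riemannZeta (by norm_num)) hz2
  rw [h2, h3, neg_div] at h1
  exact (neg_inj.mp h1).symm


lemma term_mu (d : ℕ) :
    term ↗μ 2 d = (((μ d : ℝ) / (d:ℝ)^2 : ℝ) : ℂ) := by
  rcases eq_or_ne d 0 with rfl | hd
  · simp [term]
  · rw [term_of_ne_zero hd, show ((2:ℂ)) = ((2:ℕ):ℂ) by norm_num, Complex.cpow_natCast]
    push_cast
    ring

lemma term_logmu (d : ℕ) :
    term (logMul ↗μ) 2 d = (((μ d : ℝ) * Real.log d / (d:ℝ)^2 : ℝ) : ℂ) := by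
  rcases eq_or_ne d 0 with rfl | hd
  · simp [term]
  · rw [term_of_ne_zero hd, show ((2:ℂ)) = ((2:ℕ):ℂ) by norm_num, Complex.cpow_natCast,
      logMul, ← Complex.natCast_log]
    push_cast
    ring

lemma hz2' : riemannZeta 2 ≠ 0 :=
  riemannZeta_ne_zero_of_one_lt_re (by norm_num)

lemma Lmu_eq' {s : ℂ} (hs : 1 < s.re) : L ↗μ s = (riemannZeta s)⁻¹ := by
  have h1 := LSeries_zeta_mul_Lseries_moebius (s := s) hs
  rw [LSeries_zeta_eq_riemannZeta hs] at h1
  exact eq_inv_of_mul_eq_one_right h1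

lemma hsum_mu : LSeriesSummable ↗μ 2 :=
  LSeriesSummable_moebius_iff.mpr (by norm_num)

lemma hsum_logmu : LSeriesSummable (logMul ↗μ) 2 := by
  apply LSeriesSummable_logMul_of_lt_re
  rw [abscissaOfAbsConv_moebius]
  norm_num
  exact_mod_cast one_lt_two

lemma A_eq : ∑' d : ℕ, (μ d : ℝ) / (d:ℝ)^2 = 6 / Real.pi^2 := by
  have h1 : Complex.reCLM (L ↗μ 2) = ∑' d : ℕ, Complex.reCLM (term ↗μ 2 d) :=
    Complex.reCLM.map_tsum hsum_mu
  rw [Lmu_eq' (by norm_num), riemannZeta_two] at h1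
  have h2 : ∀ d : ℕ, Complex.reCLM (term ↗μ 2 d) = (μ d : ℝ) / (d:ℝ)^2 := by
    intro d; rw [term_mu]; exact Complex.ofReal_re _
  rw [tsum_congr h2] at h1
  rw [← h1]
  have h4 : ((Real.pi:ℂ)^2/6)⁻¹ = (((6/Real.pi^2 : ℝ)):ℂ) := by
    have hpi : (Real.pi:ℂ) ≠ 0 := Complex.ofReal_ne_zero.mpr Real.pi_ne_zero
    push_cast
    field_simp
  rw [Complex.reCLM_apply, h4, Complex.ofReal_re]

lemma B_eq : ∑' d : ℕ, (μ d : ℝ) * Real.log d / (d:ℝ)^2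
    = zetaDeriv2 / (Real.pi^2/6)^2 := by
  have h1 : Complex.reCLM (L (logMul ↗μ) 2) = ∑' d : ℕ, Complex.reCLM (term (logMul ↗μ) 2 d) :=
    Complex.reCLM.map_tsum hsum_logmu
  rw [LlogMu_eq, riemannZeta_two] at h1
  have h2 : ∀ d : ℕ, Complex.reCLM (term (logMul ↗μ) 2 d)
      = (μ d : ℝ) * Real.log d / (d:ℝ)^2 := by
    intro d; rw [term_logmu]; exact Complex.ofReal_re _
  rw [tsum_congr h2] at h1
  have h3 : ((Real.pi:ℂ)^2/6)^2 = (((Real.pi^2/6)^2 : ℝ) : ℂ) := by push_cast; ring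
  rw [Complex.reCLM_apply, h3, Complex.div_ofReal_re] at h1
  rw [← h1]
  rfl


lemma core_ineq (m : ℕ) (q : ℝ) (hm : 1 ≤ m) (h1 : (m:ℝ) ≤ q) (h2 : q < m + 1) :
    |Real.log m / (m:ℝ)^2 - Real.log q / q^2| ≤ (8*Real.log q + 8)/q^3 := by
  have hq1 : (1:ℝ) ≤ q := le_trans (by exact_mod_cast hm) h1
  have hq0 : (0:ℝ) < q := by linarith
  have hlogq : 0 ≤ Real.log q := Real.log_nonneg hq1
  rcases eq_or_lt_of_le hm with hm1 | hm2
  · -- m = 1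
    have hm1' : m = 1 := hm1.symm
    subst hm1'
    have hq2 : q < 2 := by exact_mod_cast (by push_cast at h2 ⊢; linarith : q < 2)
    have hlq : Real.log q ≤ q - 1 := Real.log_le_sub_one_of_pos hq0
    rw [show ((1:ℕ):ℝ) = 1 by norm_num, Real.log_one]
    rw [show (0:ℝ)/1^2 - Real.log q/q^2 = -(Real.log q/q^2) by ring,
      abs_neg, abs_of_nonneg (div_nonneg hlogq (sq_nonneg q))]
    rw [div_le_div_iff₀ (by positivity) (by positivity)]
    nlinarith [mul_nonneg hlogq hq0.le, mul_nonneg (mul_nonneg hlogq hq0.le) hq0.le]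
  · -- 2 ≤ m
    have hm2' : (2:ℝ) ≤ m := by exact_mod_cast hm2
    have hq2 : (2:ℝ) ≤ q := le_trans hm2' h1
    have hm0 : (0:ℝ) < m := by linarith
    have hmhalf : q/2 ≤ (m:ℝ) := by linarith
    have hlogm_le : Real.log m ≤ Real.log q := Real.log_le_log hm0 h1
    have hlogm0 : 0 ≤ Real.log m := Real.log_nonneg (by linarith)
    -- key1
    have key1 : 1/(m:ℝ)^2 - 1/q^2 ≤ 8/q^3 := by
      have e1 : 1/(m:ℝ)^2 - 1/q^2 = (q^2-(m:ℝ)^2)/((m:ℝ)^2*q^2) := by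
        field_simp
      rw [e1, div_le_div_iff₀ (by positivity) (by positivity)]
      nlinarith [sq_nonneg q, sq_nonneg ((m:ℝ) - q), mul_pos hq0 hq0,
        mul_pos (mul_pos hq0 hq0) hq0, mul_pos (mul_pos (mul_pos hq0 hq0) hq0) hq0]
    have key1' : 0 ≤ 1/(m:ℝ)^2 - 1/q^2 := by
      have : 1/q^2 ≤ 1/(m:ℝ)^2 := by
        apply one_div_le_one_div_of_le (by positivity)
        nlinarith
      linarith
    -- key2
    have key2 : Real.log q - Real.log m ≤ 2/q := by
      have e2 : Real.log q - Real.log m = Real.log (q/(m:ℝ)) :=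
        (Real.log_div (by positivity) (by positivity)).symm
      rw [e2]
      have h3 : Real.log (q/(m:ℝ)) ≤ q/(m:ℝ) - 1 :=
        Real.log_le_sub_one_of_pos (by positivity)
      have h4 : q/(m:ℝ) - 1 ≤ 2/q := by
        rw [div_sub_one (by positivity), div_le_div_iff₀ (by positivity) hq0]
        nlinarith
      linarith
    have key2' : 0 ≤ Real.log q - Real.log m := by linarith
    -- decompose
    have hid : Real.log m/(m:ℝ)^2 - Real.log q/q^2
        = Real.log m * (1/(m:ℝ)^2 - 1/q^2) - (Real.log q - Real.log m)/q^2 := by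
      field_simp; ring
    rw [hid]
    have hub1 : Real.log m * (1/(m:ℝ)^2 - 1/q^2) ≤ Real.log q * (8/q^3) :=
      mul_le_mul hlogm_le key1 key1' hlogq
    have hub1' : 0 ≤ Real.log m * (1/(m:ℝ)^2 - 1/q^2) := mul_nonneg hlogm0 key1'
    have hub2 : (Real.log q - Real.log m)/q^2 ≤ (2/q)/q^2 := by gcongr
    have hub2' : 0 ≤ (Real.log q - Real.log m)/q^2 := div_nonneg key2' (sq_nonneg q)
    have ha' : 0 ≤ Real.log q * (8/q^3) := mul_nonneg hlogq (by positivity)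
    have hcomb : Real.log q * (8/q^3) + (2/q)/q^2 = (8*Real.log q + 2)/q^3 := by
      field_simp
    have hlast : (8*Real.log q + 2)/q^3 ≤ (8*Real.log q + 8)/q^3 := by gcongr <;> linarith
    have hb2 : (0:ℝ) ≤ (2/q)/q^2 := by positivity
    rw [abs_le]
    constructor <;> linarith



lemma per_term (Q d : ℕ) (hQ : 2 ≤ Q) (hd1 : 1 ≤ d) (hdQ : d ≤ Q) :
    |(moebius d : ℝ) * Real.log ((Q/d : ℕ):ℝ) / ((d:ℝ)^4 * ((Q/d:ℕ):ℝ)^2)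
      - (moebius d : ℝ) * (Real.log Q - Real.log d)/(d:ℝ)^2/(Q:ℝ)^2|
    ≤ (8*Real.log Q + 8)/((d:ℝ) * (Q:ℝ)^3) := by
  have hd0 : (0:ℝ) < d := by exact_mod_cast hd1
  have hQ0 : (0:ℝ) < Q := by positivity
  set m : ℕ := Q / d with hm_def
  set q : ℝ := (Q:ℝ) / (d:ℝ) with hq_def
  have hm1 : 1 ≤ m := (Nat.one_le_div_iff (by omega)).mpr hdQ
  have hm0 : (0:ℝ) < m := by exact_mod_cast hm1
  have hmq : (m:ℝ) ≤ q := Nat.cast_div_le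
  have hqm : q < m + 1 := by
    rw [hq_def, div_lt_iff₀ hd0]
    have h : Q < (Q/d + 1) * d :=
      (Nat.div_lt_iff_lt_mul (show 0 < d by omega)).mp (Nat.lt_succ_self _)
    calc (Q:ℝ) < ((Q/d + 1) * d : ℕ) := by exact_mod_cast h
      _ = ((m:ℝ) + 1) * d := by push_cast; ring
  have hq0 : (0:ℝ) < q := by positivity
  have hq1 : (1:ℝ) ≤ q := le_trans (by exact_mod_cast hm1) hmq
  -- rewrite second term
  have hlogq : Real.log q = Real.log Q - Real.log d := Real.log_div (by positivity) (by positivity)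
  have hfactor : (moebius d : ℝ) * Real.log ((m:ℕ):ℝ) / ((d:ℝ)^4 * ((m:ℕ):ℝ)^2)
      - (moebius d : ℝ) * (Real.log Q - Real.log d)/(d:ℝ)^2/(Q:ℝ)^2
      = (moebius d : ℝ) * ((Real.log m / (m:ℝ)^2 - Real.log q / q^2) / (d:ℝ)^4) := by
    rw [← hlogq, hq_def]
    field_simp
  rw [hfactor, abs_mul, abs_div]
  have hmu : |(moebius d : ℝ)| ≤ 1 := by
    have := abs_moebius_le_one (n := d)
    exact_mod_cast this
  have hcore := core_ineq m q hm1 hmq hqm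
  have hqQ : q ≤ (Q:ℝ) := by
    rw [hq_def]
    calc (Q:ℝ)/(d:ℝ) ≤ (Q:ℝ)/1 := by gcongr; exact_mod_cast hd1
      _ = Q := by ring
  have hlogqQ : Real.log q ≤ Real.log Q := Real.log_le_log hq0 hqQ
  have hbound : |Real.log m / (m:ℝ)^2 - Real.log q / q^2| / |(d:ℝ)^4|
      ≤ (8*Real.log Q + 8)/((d:ℝ) * (Q:ℝ)^3) := by
    rw [abs_of_nonneg (by positivity : (0:ℝ) ≤ (d:ℝ)^4)]
    calc |Real.log m / (m:ℝ)^2 - Real.log q / q^2| / (d:ℝ)^4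
        ≤ ((8*Real.log q + 8)/q^3) / (d:ℝ)^4 := by gcongr
      _ = (8*Real.log q + 8)/((d:ℝ) * (Q:ℝ)^3) := by
          rw [hq_def]
          field_simp
      _ ≤ (8*Real.log Q + 8)/((d:ℝ) * (Q:ℝ)^3) := by gcongr
  calc |(moebius d : ℝ)| * (|Real.log m / (m:ℝ)^2 - Real.log q / q^2| / |(d:ℝ)^4|)
      ≤ 1 * ((8*Real.log Q + 8)/((d:ℝ) * (Q:ℝ)^3)) := by
        apply mul_le_mul hmu hbound (by positivity) zero_le_one
    _ = (8*Real.log Q + 8)/((d:ℝ) * (Q:ℝ)^3) := one_mul _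


noncomputable def Haux (Q d : ℕ) : ℝ :=
  (moebius d : ℝ) * (Real.log Q - Real.log d) / (d:ℝ)^2

lemma tail_term (Q : ℕ) (hQ : 2 ≤ Q) (i : ℕ) :
    |Haux Q (i+(Q+1))| ≤ 4/Real.sqrt Q * (1/Real.sqrt (Q+i) - 1/Real.sqrt (Q+i+1)) := by
  have hQ0 : (0:ℝ) < Q := by positivity
  set d : ℕ := i+(Q+1) with hd_def
  have hD3 : (3:ℝ) ≤ (d:ℝ) := by
    have : 3 ≤ d := by omega
    exact_mod_cast this
  have hD0 : (0:ℝ) < d := by linarith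
  have hQD : (Q:ℝ) ≤ (d:ℝ) := by
    have : Q ≤ d := by omega
    exact_mod_cast this
  have hcast1 : ((Q:ℝ) + i) = (d:ℝ) - 1 := by push_cast [hd_def]; ring
  have hcast2 : ((Q:ℝ) + i + 1) = (d:ℝ) := by push_cast [hd_def]; ring
  rw [hcast2, hcast1]
  set a : ℝ := Real.sqrt ((d:ℝ) - 1) with ha_def
  set b : ℝ := Real.sqrt (d:ℝ) with hb_def
  have ha0 : 0 < a := Real.sqrt_pos.mpr (by linarith)
  have hb0 : 0 < b := Real.sqrt_pos.mpr hD0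
  have ha2 : a^2 = (d:ℝ) - 1 := Real.sq_sqrt (by linarith)
  have hb2 : b^2 = (d:ℝ) := Real.sq_sqrt (by linarith)
  have hab : a ≤ b := Real.sqrt_le_sqrt (by linarith)
  have hsQ0 : 0 < Real.sqrt Q := Real.sqrt_pos.mpr hQ0
  -- bound |Haux|
  have hmu : |(moebius d : ℝ)| ≤ 1 := by
    have := abs_moebius_le_one (n := d)
    exact_mod_cast this
  have hlog_le : Real.log Q ≤ Real.log d := Real.log_le_log hQ0 hQD
  have step1 : |Haux Q d| ≤ (Real.log d - Real.log Q)/(d:ℝ)^2 := by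
    rw [Haux, abs_div, abs_of_nonneg (by positivity : (0:ℝ) ≤ (d:ℝ)^2), abs_mul]
    apply div_le_div_of_nonneg_right ?_ (by positivity)
    calc |(moebius d : ℝ)| * |Real.log Q - Real.log d|
        ≤ 1 * |Real.log Q - Real.log d| := by
          apply mul_le_mul_of_nonneg_right hmu (abs_nonneg _)
      _ = Real.log d - Real.log Q := by
          rw [one_mul, abs_sub_comm, abs_of_nonneg (by linarith)]
  -- log (d/Q) ≤ 2 b / sqrt Q
  have step2 : Real.log d - Real.log Q ≤ 2 * b / Real.sqrt Q := by
    have e1 : Real.log d - Real.log Q = Real.log ((d:ℝ)/Q) :=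
      (Real.log_div (by positivity) (by positivity)).symm
    rw [e1]
    have h2 : Real.log ((d:ℝ)/Q) = 2 * Real.log (Real.sqrt ((d:ℝ)/Q)) := by
      rw [Real.log_sqrt (by positivity)]; ring
    have h3 : Real.log (Real.sqrt ((d:ℝ)/Q)) ≤ Real.sqrt ((d:ℝ)/Q) - 1 :=
      Real.log_le_sub_one_of_pos (Real.sqrt_pos.mpr (by positivity))
    have h4 : Real.sqrt ((d:ℝ)/Q) = b / Real.sqrt Q := by
      rw [hb_def, Real.sqrt_div (by positivity : (0:ℝ) ≤ (d:ℝ))]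
    rw [h4] at h3
    rw [h2, h4, show 2*b/Real.sqrt (Q:ℝ) = 2*(b/Real.sqrt (Q:ℝ)) by ring]
    linarith
  -- key : 2/b^3 <= 4*(1/a - 1/b)
  have h6 : (b - a) * (a + b) = 1 := by nlinarith [ha2, hb2]
  have key : 2/b^3 ≤ 4*(1/a - 1/b) := by
    have h5 : 1/a - 1/b = (b-a)/(a*b) := by field_simp
    rw [h5, ← mul_div_assoc, div_le_div_iff₀ (by positivity) (by positivity)]
    nlinarith [h6, mul_pos ha0 hb0, mul_pos (mul_pos ha0 hb0) hb0, sq_nonneg (b-a),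
      mul_le_mul_of_nonneg_right hab hb0.le,
      mul_le_mul_of_nonneg_right (mul_le_mul_of_nonneg_right hab hb0.le) hb0.le,
      mul_le_mul_of_nonneg_right (mul_le_mul_of_nonneg_right (mul_le_mul_of_nonneg_right hab hb0.le) hb0.le) hb0.le]
  -- assemble
  have hfin : 2 * b / Real.sqrt Q / (d:ℝ)^2 ≤ 4/Real.sqrt Q * (1/a - 1/b) := by
    have e7 : 2 * b / Real.sqrt Q / (d:ℝ)^2 = (2*b/(d:ℝ)^2) / Real.sqrt Q := by ring
    have e8 : (d:ℝ)^2 = b^4 := by rw [← hb2]; ring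
    have e9 : 2*b/(d:ℝ)^2 = 2/b^3 := by
      rw [e8]
      field_simp
    rw [e7, e9]
    calc 2/b^3 / Real.sqrt Q ≤ (4*(1/a - 1/b)) / Real.sqrt Q := by
          exact div_le_div_of_nonneg_right key hsQ0.le
      _ = 4/Real.sqrt Q * (1/a - 1/b) := by ring
  calc |Haux Q d| ≤ (Real.log d - Real.log Q)/(d:ℝ)^2 := step1
    _ ≤ 2 * b / Real.sqrt Q / (d:ℝ)^2 := by
        apply div_le_div_of_nonneg_right step2 (by positivity)
    _ ≤ 4/Real.sqrt Q * (1/a - 1/b) := hfin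

lemma tail_partial (Q : ℕ) (hQ : 2 ≤ Q) (n : ℕ) :
    ∑ i ∈ Finset.range n, (4/Real.sqrt Q * (1/Real.sqrt ((Q:ℝ)+i) - 1/Real.sqrt ((Q:ℝ)+i+1)))
      ≤ 4/Q := by
  have hQ0 : (0:ℝ) < Q := by positivity
  have hsQ0 : 0 < Real.sqrt Q := Real.sqrt_pos.mpr hQ0
  have hcongr : ∀ i ∈ Finset.range n,
      4/Real.sqrt Q * (1/Real.sqrt ((Q:ℝ)+i) - 1/Real.sqrt ((Q:ℝ)+i+1))
      = (fun j : ℕ => 4/Real.sqrt Q * (1/Real.sqrt ((Q:ℝ)+j))) i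
        - (fun j : ℕ => 4/Real.sqrt Q * (1/Real.sqrt ((Q:ℝ)+j))) (i+1) := by
    intro i _
    simp only [Nat.cast_add, Nat.cast_one]
    ring
  rw [Finset.sum_congr rfl hcongr, Finset.sum_range_sub']
  simp only [Nat.cast_zero, add_zero]
  have h1 : 4/Real.sqrt Q * (1/Real.sqrt Q) = 4/(Q:ℝ) := by
    rw [div_mul_div_comm, mul_one, Real.mul_self_sqrt hQ0.le]
  have h2 : 0 ≤ 4/Real.sqrt Q * (1/Real.sqrt ((Q:ℝ)+n)) := by positivity
  linarith

lemma sum_mu_re : Summable (fun d : ℕ => ((moebius d : ℤ) : ℝ)/(d:ℝ)^2) := by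
  refine ((Complex.hasSum_re hsum_mu.hasSum).summable).congr fun d => ?_
  rw [term_mu]; exact Complex.ofReal_re _

lemma sum_logmu_re : Summable (fun d : ℕ => ((moebius d : ℤ) : ℝ) * Real.log d/(d:ℝ)^2) := by
  refine ((Complex.hasSum_re hsum_logmu.hasSum).summable).congr fun d => ?_
  rw [term_logmu]; exact Complex.ofReal_re _

lemma Haux_summable (Q : ℕ) : Summable (Haux Q) := by
  apply Summable.congr ((sum_mu_re.mul_left (Real.log Q)).sub sum_logmu_re)
  intro d
  rw [Haux]; ring

lemma harmonic_sum_le (Q : ℕ) : ∑ d ∈ Finset.Icc 1 Q, (1:ℝ)/(d:ℝ) ≤ 1 + Real.log Q := by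
  calc ∑ d ∈ Finset.Icc 1 Q, (1:ℝ)/(d:ℝ) = ((harmonic Q : ℚ) : ℝ) := by
        rw [harmonic_eq_sum_Icc]; push_cast; simp [one_div]
    _ ≤ 1 + Real.log Q := harmonic_le_one_add_log Q

lemma tail_bound (Q : ℕ) (hQ : 2 ≤ Q) :
    |∑' i : ℕ, Haux Q (i + (Q+1))| ≤ 4/Q := by
  have hs : Summable fun i : ℕ => Haux Q (i + (Q+1)) :=
    (summable_nat_add_iff (Q+1)).mpr (Haux_summable Q)
  have habs : Summable fun i : ℕ => |Haux Q (i + (Q+1))| := hs.abs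
  have h1 : |∑' i : ℕ, Haux Q (i + (Q+1))| ≤ ∑' i : ℕ, |Haux Q (i + (Q+1))| := by
    simpa [Real.norm_eq_abs] using
      norm_tsum_le_tsum_norm (f := fun i : ℕ => Haux Q (i + (Q+1)))
        (by simpa [Real.norm_eq_abs] using habs)
  refine h1.trans ?_
  apply Real.tsum_le_of_sum_range_le (fun n => abs_nonneg _)
  intro n
  refine le_trans (Finset.sum_le_sum fun i _ => tail_term Q hQ i) (tail_partial Q hQ n)


theorem moebius_log_floor_sum_estimate (Q : ℕ) (hQ : 2 ≤ Q) :
    |(∑ d ∈ Finset.Icc 1 Q,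
        (moebius d : ℝ) * Real.log ((Q / d : ℕ) : ℝ) / ((d : ℝ) ^ 4 * ((Q / d : ℕ) : ℝ) ^ 2))
      - 6 * Real.log Q / (Real.pi ^ 2 * (Q : ℝ) ^ 2)
      + zetaDeriv2 / ((Q : ℝ) ^ 2 * (Real.pi ^ 2 / 6) ^ 2)| ≤
    (16 * (Real.log Q) ^ 2 + 12 * Real.log Q + 64) / (Q : ℝ) ^ 3 := by
  have hQ0 : (0:ℝ) < Q := by positivity
  have hQ1 : (1:ℝ) ≤ Q := by exact_mod_cast Nat.one_le_of_lt hQ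
  set LQ : ℝ := Real.log Q with hLQ
  have hL0 : 0 ≤ LQ := Real.log_nonneg hQ1
  have hpi : Real.pi ≠ 0 := Real.pi_ne_zero
  -- tsum identity
  have htsum : ∑' d : ℕ, Haux Q d = 6 * LQ / Real.pi^2 - zetaDeriv2 / (Real.pi^2/6)^2 := by
    have h1 : (fun d : ℕ => Haux Q d)
        = fun d => LQ * (((moebius d : ℤ):ℝ)/(d:ℝ)^2) - ((moebius d : ℤ):ℝ)*Real.log d/(d:ℝ)^2 := by
      funext d; rw [Haux]; ring
    rw [h1, Summable.tsum_sub (sum_mu_re.mul_left LQ) sum_logmu_re, tsum_mul_left, A_eq, B_eq]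
    ring
  -- split tsum
  have hsplit := Summable.sum_add_tsum_nat_add (f := Haux Q) (Q+1) (Haux_summable Q)
  set T : ℝ := ∑' i : ℕ, Haux Q (i + (Q+1)) with hT
  have hrange : ∑ i ∈ Finset.range (Q+1), Haux Q i = ∑ d ∈ Finset.Icc 1 Q, Haux Q d := by
    symm
    apply Finset.sum_subset
    · intro x hx
      simp only [Finset.mem_Icc, Finset.mem_range] at *
      omega
    · intro x hx hx'
      have hx0 : x = 0 := by
        simp only [Finset.mem_Icc, Finset.mem_range] at *
        omega
      subst hx0
      simp [Haux]
  have hIccT : ∑ d ∈ Finset.Icc 1 Q, Haux Q d + T = ∑' d : ℕ, Haux Q d := by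
    rw [← hrange]; exact hsplit
  -- rewrite goal expression
  have hmid : 6 * LQ / (Real.pi ^ 2 * (Q : ℝ) ^ 2) - zetaDeriv2 / ((Q : ℝ) ^ 2 * (Real.pi ^ 2 / 6) ^ 2)
      = (∑' d : ℕ, Haux Q d)/(Q:ℝ)^2 := by
    rw [htsum]; ring
  have hkey : (∑ d ∈ Finset.Icc 1 Q,
        (moebius d : ℝ) * Real.log ((Q / d : ℕ) : ℝ) / ((d : ℝ) ^ 4 * ((Q / d : ℕ) : ℝ) ^ 2))
      - 6 * Real.log Q / (Real.pi ^ 2 * (Q : ℝ) ^ 2)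
      + zetaDeriv2 / ((Q : ℝ) ^ 2 * (Real.pi ^ 2 / 6) ^ 2)
      = (∑ d ∈ Finset.Icc 1 Q,
          ((moebius d : ℝ) * Real.log ((Q / d : ℕ) : ℝ) / ((d : ℝ) ^ 4 * ((Q / d : ℕ) : ℝ) ^ 2)
            - Haux Q d/(Q:ℝ)^2)) - T/(Q:ℝ)^2 := by
    rw [Finset.sum_sub_distrib, ← Finset.sum_div]
    have : 6 * Real.log Q / (Real.pi ^ 2 * (Q : ℝ) ^ 2)
        - zetaDeriv2 / ((Q : ℝ) ^ 2 * (Real.pi ^ 2 / 6) ^ 2)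
        = ((∑ d ∈ Finset.Icc 1 Q, Haux Q d) + T)/(Q:ℝ)^2 := by
      rw [hIccT, ← hmid, hLQ]
    rw [show (∑ d ∈ Finset.Icc 1 Q,
        (moebius d : ℝ) * Real.log ((Q / d : ℕ) : ℝ) / ((d : ℝ) ^ 4 * ((Q / d : ℕ) : ℝ) ^ 2))
      - 6 * Real.log Q / (Real.pi ^ 2 * (Q : ℝ) ^ 2)
      + zetaDeriv2 / ((Q : ℝ) ^ 2 * (Real.pi ^ 2 / 6) ^ 2)
      = (∑ d ∈ Finset.Icc 1 Q,
        (moebius d : ℝ) * Real.log ((Q / d : ℕ) : ℝ) / ((d : ℝ) ^ 4 * ((Q / d : ℕ) : ℝ) ^ 2))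
      - (6 * Real.log Q / (Real.pi ^ 2 * (Q : ℝ) ^ 2)
        - zetaDeriv2 / ((Q : ℝ) ^ 2 * (Real.pi ^ 2 / 6) ^ 2)) by ring, this]
    ring
  rw [hkey]
  -- triangle inequality
  have htri : |(∑ d ∈ Finset.Icc 1 Q,
        ((moebius d : ℝ) * Real.log ((Q / d : ℕ) : ℝ) / ((d : ℝ) ^ 4 * ((Q / d : ℕ) : ℝ) ^ 2)
          - Haux Q d/(Q:ℝ)^2)) - T/(Q:ℝ)^2|
      ≤ (∑ d ∈ Finset.Icc 1 Q,
          |(moebius d : ℝ) * Real.log ((Q / d : ℕ) : ℝ) / ((d : ℝ) ^ 4 * ((Q / d : ℕ) : ℝ) ^ 2)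
            - Haux Q d/(Q:ℝ)^2|) + |T|/(Q:ℝ)^2 := by
    calc |_ - T/(Q:ℝ)^2| ≤ |(∑ d ∈ Finset.Icc 1 Q,
          ((moebius d : ℝ) * Real.log ((Q / d : ℕ) : ℝ) / ((d : ℝ) ^ 4 * ((Q / d : ℕ) : ℝ) ^ 2)
            - Haux Q d/(Q:ℝ)^2))| + |T/(Q:ℝ)^2| := abs_sub _ _
      _ ≤ _ := by
          rw [abs_div, abs_of_nonneg (by positivity : (0:ℝ) ≤ (Q:ℝ)^2)]
          exact add_le_add (Finset.abs_sum_le_sum_abs _ _) le_rfl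
  refine htri.trans ?_
  -- per-term bounds
  have hper : ∑ d ∈ Finset.Icc 1 Q,
      |(moebius d : ℝ) * Real.log ((Q / d : ℕ) : ℝ) / ((d : ℝ) ^ 4 * ((Q / d : ℕ) : ℝ) ^ 2)
        - Haux Q d/(Q:ℝ)^2|
      ≤ (8*LQ + 8)/(Q:ℝ)^3 * (1 + LQ) := by
    calc ∑ d ∈ Finset.Icc 1 Q,
        |(moebius d : ℝ) * Real.log ((Q / d : ℕ) : ℝ) / ((d : ℝ) ^ 4 * ((Q / d : ℕ) : ℝ) ^ 2)
          - Haux Q d/(Q:ℝ)^2|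
        ≤ ∑ d ∈ Finset.Icc 1 Q, (8*LQ + 8)/(Q:ℝ)^3 * (1/(d:ℝ)) := by
          apply Finset.sum_le_sum
          intro d hd
          rw [Finset.mem_Icc] at hd
          have hpt := per_term Q d hQ hd.1 hd.2
          have heq : Haux Q d/(Q:ℝ)^2
              = (moebius d : ℝ) * (Real.log Q - Real.log d)/(d:ℝ)^2/(Q:ℝ)^2 := by
            rw [Haux]
          rw [heq]
          refine hpt.trans (le_of_eq ?_)
          rw [hLQ]; ring
      _ = (8*LQ + 8)/(Q:ℝ)^3 * ∑ d ∈ Finset.Icc 1 Q, (1:ℝ)/(d:ℝ) := by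
          rw [Finset.mul_sum]
      _ ≤ (8*LQ + 8)/(Q:ℝ)^3 * (1 + LQ) := by
          apply mul_le_mul_of_nonneg_left (harmonic_sum_le Q) (by positivity)
  have htail : |T|/(Q:ℝ)^2 ≤ 4/(Q:ℝ)^3 := by
    calc |T|/(Q:ℝ)^2 ≤ (4/(Q:ℝ))/(Q:ℝ)^2 :=
          div_le_div_of_nonneg_right (tail_bound Q hQ) (by positivity)
      _ = 4/(Q:ℝ)^3 := by ring
  calc (∑ d ∈ Finset.Icc 1 Q,
        |(moebius d : ℝ) * Real.log ((Q / d : ℕ) : ℝ) / ((d : ℝ) ^ 4 * ((Q / d : ℕ) : ℝ) ^ 2)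
          - Haux Q d/(Q:ℝ)^2|) + |T|/(Q:ℝ)^2
      ≤ (8*LQ + 8)/(Q:ℝ)^3 * (1 + LQ) + 4/(Q:ℝ)^3 := add_le_add hper htail
    _ = ((8*LQ + 8) * (1 + LQ) + 4)/(Q:ℝ)^3 := by ring
    _ ≤ (16 * LQ ^ 2 + 12 * LQ + 64) / (Q : ℝ) ^ 3 := by
        apply div_le_div_of_nonneg_right ?_ (by positivity)
        nlinarith [sq_nonneg (4*LQ - 1), hL0]
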